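/- Let G be a total-payoff game and v a vertex. If σ is a memoryless strategy for Max such that Val(v, σ) ≠ −∞, then every finite play starting in v and conforming to σ satisfies TP(π) ≥ −(|V|−1)·W. Symmetrically, if τ is a memoryless strategy for Min such that Val(v, τ) ≠ +∞, then every finite play starting in v and conforming to τ satisfies TP(π) ≤ (|V|−1)·W. -/

import Mathlib

open Filter

/-- A two-player turn-based weighted game graph. `owner v = true` means that
vertex `v` belongs to player Max, `owner v = false` that it belongs to player Min.
Every vertex has at least one successor. -/
structure Game (V : Type) where
  owner : V → Bool
  E : V → V → Prop
  nonempty : ∀ v, ∃ v', E v v'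
  w : V → V → ℤ

namespace Game

variable {V : Type}

/-- The (reversed) history of the first `k` vertices of `π` (most recent first). -/
def hist (π : ℕ → V) (k : ℕ) : List V := (List.ofFn fun i : Fin k => π i).reverse

/-- A strategy: given the (reversed) list of previously visited vertices and the current
vertex, it picks a successor of the current vertex. -/
structure Strategy (g : Game V) where
  next : List V → V → V
  valid : ∀ h v, g.E v (next h v)

/-- A memoryless strategy only depends on the current vertex. -/
def Strategy.Memoryless {g : Game V} (s : g.Strategy) : Prop :=
  ∀ h h' v, s.next h v = s.next h' v

/-- A finite-memory strategy is one encoded by a deterministic Moore machine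
`⟨M, m0, up, dec⟩`: the choice after a finite play is `dec` applied to the memory state
reached by reading the play (the initial vertex is not read) and to the last vertex. -/
def Strategy.FiniteMemory {g : Game V} (s : g.Strategy) : Prop :=
  ∃ (M : Type) (_ : Fintype M) (m0 : M) (up : M → V → M) (dec : M → V → V),
    ∀ h v, s.next h v = dec (List.foldl up m0 (((h.reverse ++ [v]).drop 1))) v

variable (g : Game V)

/-- Next vertex chosen by the owner of the current vertex. -/
def step (σ τ : g.Strategy) (h : List V) (v : V) : V :=
  if g.owner v then σ.next h v else τ.next h v

/-- Current vertex and reversed history after `k` steps of the play `Play(v, σ, τ)`. -/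
def playAux (σ τ : g.Strategy) (v : V) : ℕ → V × List V
  | 0 => (v, [])
  | k+1 =>
      let p := playAux σ τ v k
      (g.step σ τ p.2 p.1, p.1 :: p.2)

/-- `Play(v, σ, τ)`: the unique play starting in `v` and conforming to the
strategy `σ` of Max and the strategy `τ` of Min. -/
def play (σ τ : g.Strategy) (v : V) (k : ℕ) : V := (g.playAux σ τ v k).1

/-- An infinite sequence of vertices is a play when consecutive vertices are linked
by edges. -/
def IsPlay (π : ℕ → V) : Prop := ∀ k, g.E (π k) (π (k+1))

/-- A play conforms to a strategy `s` of the player `p` if, whenever the current vertex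
belongs to `p`, the next vertex is the one prescribed by `s`. -/
def Conforms (p : Bool) (s : g.Strategy) (π : ℕ → V) : Prop :=
  ∀ k, g.owner (π k) = p → π (k+1) = s.next (hist π k) (π k)

/-- Total-payoff of the prefix of length `k`: the sum of the first `k` edge weights. -/
def TPfin (π : ℕ → V) (k : ℕ) : ℤ := ∑ i ∈ Finset.range k, g.w (π i) (π (i+1))

/-- Total payoff of an infinite play: `liminf` of the payoffs of its prefixes. -/
noncomputable def TP (π : ℕ → V) : EReal :=
  liminf (fun k => (((g.TPfin π k : ℤ) : ℝ) : EReal)) atTop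

/-- Mean payoff of an infinite play. -/
noncomputable def MP (π : ℕ → V) : EReal :=
  liminf (fun k => ((((g.TPfin π k : ℤ) : ℝ) / (k : ℝ)) : EReal)) atTop

open Classical in
/-- Min-cost reachability payoff with target `t`: total payoff up to the first visit
of `t`, and `+∞` if `t` is never visited. -/
noncomputable def MCR (t : V) (π : ℕ → V) : EReal :=
  if h : ∃ k, π k = t then (((g.TPfin π (Nat.find h) : ℤ) : ℝ) : EReal) else ⊤

open Classical in
/-- `MCR` payoff restricted to reaching the target among the first `i+1` vertices. -/
noncomputable def MCRbd (t : V) (i : ℕ) (π : ℕ → V) : EReal :=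
  if ∃ k ≤ i, π k = t then g.MCR t π else ⊤

/-- Value of a strategy `σ` of Max from `v` : `inf_τ P(Play(v, σ, τ))`. -/
noncomputable def valMax (P : (ℕ → V) → EReal) (v : V) (σ : g.Strategy) : EReal :=
  ⨅ τ : g.Strategy, P (g.play σ τ v)

/-- Value of a strategy `τ` of Min from `v` : `sup_σ P(Play(v, σ, τ))`. -/
noncomputable def valMin (P : (ℕ → V) → EReal) (v : V) (τ : g.Strategy) : EReal :=
  ⨆ σ : g.Strategy, P (g.play σ τ v)

/-- Lower value `Val⁻(v) = sup_σ inf_τ P(Play(v, σ, τ))`. -/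
noncomputable def lowerVal (P : (ℕ → V) → EReal) (v : V) : EReal :=
  ⨆ σ : g.Strategy, g.valMax P v σ

/-- Upper value `Val⁺(v) = inf_τ sup_σ P(Play(v, σ, τ))`. -/
noncomputable def upperVal (P : (ℕ → V) → EReal) (v : V) : EReal :=
  ⨅ τ : g.Strategy, g.valMin P v τ

end Game

/-- A min-cost reachability game: a game together with a target vertex `t` whose only
outgoing edge is a self-loop of weight `0`. -/
structure MCRGame (V : Type) extends Game V where
  t : V
  loop : E t t
  loopOnly : ∀ v, E t v → v = t
  loopZero : w t t = 0

/-- The value of a (determined) MCR game. -/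
noncomputable def MCRGame.Val {V : Type} (G : MCRGame V) : V → EReal :=
  fun v => G.toGame.lowerVal (G.toGame.MCR G.t) v

/-- The `i`-step value `val_i(v) = inf_τ sup_σ MCR_i(Play(v, σ, τ))`. -/
noncomputable def MCRGame.ival {V : Type} (G : MCRGame V) (i : ℕ) : V → EReal :=
  fun v => G.toGame.upperVal (G.toGame.MCRbd G.t i) v


namespace Game
variable {V : Type}

lemma aux_TPfin_succ (g : Game V) (π : ℕ → V) (k : ℕ) :
    g.TPfin π (k+1) = g.TPfin π k + g.w (π k) (π (k+1)) := Finset.sum_range_succ _ _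

lemma aux_tp_block (g : Game V) (π : ℕ → V) (a b : ℕ) :
    g.TPfin π (a+b) = g.TPfin π a + ∑ t ∈ Finset.range b, g.w (π (a+t)) (π (a+t+1)) := by
  induction b with
  | zero => simp
  | succ b ih =>
      rw [show a + (b+1) = (a+b)+1 from rfl, aux_TPfin_succ, ih, Finset.sum_range_succ]
      ring_nf

lemma aux_tp_lower (g : Game V) (W : ℕ)
    (hW : ∀ v v', g.E v v' → |g.w v v'| ≤ (W:ℤ)) (π : ℕ → V) (n : ℕ)
    (hE : ∀ i, i < n → g.E (π i) (π (i+1))) :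
    -((n:ℤ) * W) ≤ g.TPfin π n := by
  induction n with
  | zero => simp [TPfin]
  | succ n ih =>
      have h1 := (abs_le.1 (hW _ _ (hE n n.lt_succ_self))).1
      have h2 : -((n:ℤ) * W) ≤ g.TPfin π n := ih (fun i hi => hE i (hi.trans n.lt_succ_self))
      rw [aux_TPfin_succ]
      push_cast
      linarith

lemma aux_tp_upper_add (g : Game V) (W : ℕ)
    (hW : ∀ v v', g.E v v' → |g.w v v'| ≤ (W:ℤ)) (π : ℕ → V)
    (hf : g.IsPlay π) (a b : ℕ) :
    g.TPfin π (a+b) ≤ g.TPfin π a + (b:ℤ) * W := by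
  induction b with
  | zero => simp
  | succ b ih =>
      have h1 := (abs_le.1 (hW _ _ (hf (a+b)))).2
      rw [show a + (b+1) = (a+b)+1 from rfl, aux_TPfin_succ]
      push_cast
      linarith


lemma aux_realize (g : Game V) (σ : g.Strategy) (hσ : σ.Memoryless) (f : ℕ → V)
    (hplay : g.IsPlay f) (hconf : ∀ k, g.owner (f k) = true → f (k+1) = σ.next [] (f k)) :
    ∃ τ : g.Strategy, ∀ k, g.play σ τ (f 0) k = f k := by
  classical
  have hval : ∀ (h : List V) (v : V), g.E v
      (if g.E v (f (h.length + 1)) then f (h.length + 1) else Classical.choose (g.nonempty v)) := by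
    intro h v
    split
    · assumption
    · exact Classical.choose_spec (g.nonempty v)
  set τ : g.Strategy := ⟨fun h v => if g.E v (f (h.length + 1)) then f (h.length + 1)
      else Classical.choose (g.nonempty v), hval⟩ with hτ
  have key : ∀ k, (g.playAux σ τ (f 0) k).1 = f k ∧ (g.playAux σ τ (f 0) k).2.length = k := by
    intro k
    induction k with
    | zero => exact ⟨rfl, rfl⟩
    | succ k ih =>
        refine ⟨?_, ?_⟩
        · show g.step σ τ (g.playAux σ τ (f 0) k).2 (g.playAux σ τ (f 0) k).1 = f (k+1)
          rw [step, ih.1]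
          by_cases h : g.owner (f k) = true
          · rw [if_pos h, hσ _ []]
            exact (hconf k h).symm
          · rw [if_neg h, hτ]
            have e := ih.2
            rw [hτ] at e
            dsimp only
            rw [e]
            exact if_pos (hplay k)
        · show ((g.playAux σ τ (f 0) k).1 :: (g.playAux σ τ (f 0) k).2).length = k + 1
          simp [ih.2]
  exact ⟨τ, fun k => (key k).1⟩


lemma aux_lasso [Fintype V] (g : Game V) (W : ℕ)
    (hW : ∀ v v', g.E v v' → |g.w v v'| ≤ (W:ℤ)) (σ : g.Strategy) :
    ∀ (n : ℕ) (π : ℕ → V), (∀ i, i < n → g.E (π i) (π (i+1))) →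
      (∀ k, k < n → g.owner (π k) = true → π (k+1) = σ.next [] (π k)) →
      g.TPfin π n < -(((Fintype.card V : ℤ) - 1) * W) →
      ∃ f : ℕ → V, f 0 = π 0 ∧ g.IsPlay f ∧
        (∀ k, g.owner (f k) = true → f (k+1) = σ.next [] (f k)) ∧
        (∀ B : ℤ, ∃ N, ∀ k ≥ N, g.TPfin f k ≤ B) := by
  intro n
  induction n using Nat.strong_induction_on with
  | _ n IH =>
  intro π hE hC hlt
  by_cases hn : n < Fintype.card V
  · exfalso
    have hlow := g.aux_tp_lower W hW π n hE
    have hn1 : (n:ℤ) ≤ (Fintype.card V : ℤ) - 1 := by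
      have : (n:ℤ) < Fintype.card V := by exact_mod_cast hn
      omega
    have hW0 : (0:ℤ) ≤ W := Int.ofNat_nonneg W
    nlinarith
  · push_neg at hn
    obtain ⟨a, b, hab, heq⟩ := Fintype.exists_ne_map_eq_of_card_lt
      (fun i : Fin (Fintype.card V + 1) => π i) (by simp)
    obtain ⟨i, j, hij, hπij, hjn⟩ : ∃ i j : ℕ, i < j ∧ π i = π j ∧ j ≤ n := by
      rcases lt_or_gt_of_ne (fun h : a = b => hab h) with h | h
      · exact ⟨a, b, h, heq, le_trans (Nat.lt_succ_iff.1 b.isLt) hn⟩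
      · exact ⟨b, a, h, heq.symm, le_trans (Nat.lt_succ_iff.1 a.isLt) hn⟩
    set d := j - i with hd
    have hd0 : 0 < d := Nat.sub_pos_of_lt hij
    have hjd : j = i + d := by omega
    set c := g.TPfin π j - g.TPfin π i with hc
    by_cases hcneg : c < 0
    · set f : ℕ → V := fun k => if k < i then π k else π (i + (k - i) % d) with hf
      have hfle : ∀ k, k ≤ j → f k = π k := by
        intro k hk
        simp only [hf]
        by_cases h : k < i
        · simp [h]
        · push_neg at h
          rw [if_neg (by omega)]
          by_cases h2 : k < j
          · rw [Nat.mod_eq_of_lt (by omega)]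
            congr 1; omega
          · have hkj : k = j := by omega
            subst hkj
            rw [show k - i = d from by omega, Nat.mod_self]
            simpa using hπij
      have hstep : ∀ k, ∃ k', k' < n ∧ f k = π k' ∧ f (k+1) = π (k'+1) := by
        intro k
        by_cases h : k + 1 ≤ i
        · exact ⟨k, by omega, hfle k (by omega), hfle (k+1) (by omega)⟩
        · push_neg at h
          have hik : i ≤ k := by omega
          set r := (k - i) % d with hr
          have hrd : r < d := Nat.mod_lt _ hd0
          refine ⟨i + r, by omega, ?_, ?_⟩
          · simp only [hf]; simp only [if_neg (by omega : ¬ k < i)]; rfl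
          · have h1 : k + 1 - i = (k - i) + 1 := by omega
            have hmm : (k - i + 1) % d = (r + 1) % d :=
              ((Nat.mod_modEq (k - i) d).add_right 1).symm
            simp only [hf]
            simp only [if_neg (by omega : ¬ k + 1 < i), h1, hmm]
            by_cases h2 : r + 1 < d
            · rw [Nat.mod_eq_of_lt h2]
              first | rfl | (congr 1; omega)
            · have h3 : r + 1 = d := by omega
              rw [h3, Nat.mod_self]
              simp only [Nat.add_zero]
              rw [hπij, hjd]
              first | rfl | (congr 1; omega)
      have hfplay : g.IsPlay f := by
        intro k
        obtain ⟨k', hk', h1, h2⟩ := hstep k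
        rw [h1, h2]; exact hE k' hk'
      have hfconf : ∀ k, g.owner (f k) = true → f (k+1) = σ.next [] (f k) := by
        intro k hk
        obtain ⟨k', hk', h1, h2⟩ := hstep k
        rw [h1] at hk ⊢; rw [h2]; exact hC k' hk' hk
      have hf0 : f 0 = π 0 := hfle 0 (by omega)
      refine ⟨f, hf0, hfplay, hfconf, ?_⟩
      have hblock : ∀ m : ℕ, g.TPfin f (i + m*d) = g.TPfin π i + (m:ℤ) * c := by
        intro m
        induction m with
        | zero =>
            simp only [Nat.zero_mul, Nat.add_zero, Nat.cast_zero, zero_mul, add_zero]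
            unfold TPfin
            apply Finset.sum_congr rfl
            intro t ht
            rw [Finset.mem_range] at ht
            rw [hfle t (by omega), hfle (t+1) (by omega)]
        | succ m ih =>
            have harith : i + (m+1)*d = (i + m*d) + d := by ring
            rw [harith, g.aux_tp_block f (i + m*d) d, ih]
            have hsum : ∑ t ∈ Finset.range d, g.w (f (i + m*d + t)) (f (i + m*d + t + 1))
                = ∑ t ∈ Finset.range d, g.w (π (i + t)) (π (i + t + 1)) := by
              apply Finset.sum_congr rfl
              intro t ht
              rw [Finset.mem_range] at ht
              have e1 : f (i + m*d + t) = π (i + t) := by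
                simp only [hf]
                rw [if_neg (by omega : ¬ i + m*d + t < i)]
                rw [show i + m*d + t - i = t + m*d from by omega,
                  Nat.add_mul_mod_self_right, Nat.mod_eq_of_lt ht]
              have e2 : f (i + m*d + t + 1) = π (i + t + 1) := by
                simp only [hf]
                rw [if_neg (by omega : ¬ i + m*d + t + 1 < i)]
                rw [show i + m*d + t + 1 - i = (t+1) + m*d from by omega,
                  Nat.add_mul_mod_self_right]
                by_cases h2 : t + 1 < d
                · rw [Nat.mod_eq_of_lt h2]
                  first | rfl | (congr 1; omega)
                · rw [show t + 1 = d from by omega, Nat.mod_self]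
                  simp only [Nat.add_zero]
                  rw [hπij, hjd]
                  first | rfl | (congr 1; omega)
              rw [e1, e2]
            rw [hsum]
            have hcsum : ∑ t ∈ Finset.range d, g.w (π (i + t)) (π (i + t + 1)) = c := by
              have h4 := g.aux_tp_block π i d
              rw [← hjd] at h4
              rw [hc]
              omega
            rw [hcsum]
            push_cast
            ring
      intro B
      set m : ℕ := (g.TPfin π i + (d:ℤ)*W - B).toNat with hm
      refine ⟨i + m*d, ?_⟩
      intro k hk
      have hik : i ≤ k := le_trans (by omega) hk
      set q := (k - i) / d with hq
      set r := (k - i) % d with hr2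
      have hdecomp : k = (i + q*d) + r := by
        have h0 : q * d + r = k - i := by
          rw [Nat.mul_comm]
          exact Nat.div_add_mod (k - i) d
        omega
      have hmq : m ≤ q := by
        have h1 : m * d ≤ k - i := by omega
        calc m = m * d / d := by rw [Nat.mul_div_cancel m hd0]
        _ ≤ (k - i)/d := Nat.div_le_div_right h1
      have hub : g.TPfin f k ≤ g.TPfin f (i + q*d) + (r:ℤ) * W := by
        conv_lhs => rw [hdecomp]
        exact g.aux_tp_upper_add W hW f hfplay _ _
      rw [hblock q] at hub
      have hc1 : c ≤ -1 := by omega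
      have hqc : (q:ℤ) * c ≤ (m:ℤ) * c := by
        apply mul_le_mul_of_nonpos_right _ (le_of_lt hcneg)
        exact_mod_cast hmq
      have hmc : (m:ℤ) * c ≤ -(m:ℤ) := by nlinarith [Int.ofNat_nonneg m]
      have hrW : (r:ℤ) * W ≤ (d:ℤ) * W := by
        have hrd : (r:ℤ) ≤ d := by
          have := Nat.mod_lt (k - i) hd0
          omega
        exact mul_le_mul_of_nonneg_right hrd (Int.ofNat_nonneg W)
      have hmB : g.TPfin π i + (d:ℤ)*W - B ≤ (m:ℤ) := Int.self_le_toNat _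
      linarith
    · push_neg at hcneg
      set π' : ℕ → V := fun k => if k < i then π k else π (k + d) with hπ'
      have hπ'le : ∀ k, k ≤ i → π' k = π k := by
        intro k hk
        simp only [hπ']
        by_cases h : k < i
        · simp [h]
        · have hki : k = i := by omega
          subst hki
          rw [if_neg (lt_irrefl k), show k + d = j from by omega, ← hπij]
      set n' := n - d with hn'
      have hnn' : n' < n := by omega
      have hin' : i ≤ n' := by omega
      have hE' : ∀ k, k < n' → g.E (π' k) (π' (k+1)) := by
        intro k hk
        by_cases h : k + 1 ≤ i
        · rw [hπ'le k (by omega), hπ'le (k+1) h]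
          exact hE k (by omega)
        · push_neg at h
          simp only [hπ', if_neg (by omega : ¬ k < i), if_neg (by omega : ¬ k + 1 < i)]
          rw [show k + 1 + d = (k + d) + 1 from by omega]
          exact hE (k+d) (by omega)
      have hC' : ∀ k, k < n' → g.owner (π' k) = true → π' (k+1) = σ.next [] (π' k) := by
        intro k hk hown
        by_cases h : k + 1 ≤ i
        · rw [hπ'le k (by omega)] at hown ⊢
          rw [hπ'le (k+1) h]
          exact hC k (by omega) hown
        · push_neg at h
          simp only [hπ', if_neg (by omega : ¬ k < i)] at hown ⊢
          simp only [if_neg (by omega : ¬ k + 1 < i)]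
          rw [show k + 1 + d = (k + d) + 1 from by omega]
          exact hC (k+d) (by omega) hown
      have htp' : g.TPfin π' n' = g.TPfin π n - c := by
        have hsplit : n' = i + (n' - i) := by omega
        rw [hsplit, g.aux_tp_block π' i (n' - i)]
        have h1 : g.TPfin π' i = g.TPfin π i := by
          unfold TPfin
          apply Finset.sum_congr rfl
          intro t ht
          rw [Finset.mem_range] at ht
          rw [hπ'le t (by omega), hπ'le (t+1) (by omega)]
        have h2 : ∑ t ∈ Finset.range (n' - i), g.w (π' (i+t)) (π' (i+t+1))
            = ∑ t ∈ Finset.range (n' - i), g.w (π (j+t)) (π (j+t+1)) := by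
          apply Finset.sum_congr rfl
          intro t ht
          simp only [hπ', if_neg (by omega : ¬ i + t < i), if_neg (by omega : ¬ i + t + 1 < i)]
          rw [show i + t + d = j + t from by omega, show i + t + 1 + d = j + t + 1 from by omega]
        have h3 := g.aux_tp_block π j (n' - i)
        rw [show j + (n' - i) = n from by omega] at h3
        rw [h1, h2, hc]
        omega
      have hlt' : g.TPfin π' n' < -(((Fintype.card V : ℤ) - 1) * W) := by
        rw [htp']
        linarith
      obtain ⟨f, hf0, hfp, hfc, hfd⟩ := IH n' hnn' π' hE' hC' hlt'
      exact ⟨f, by rw [hf0, hπ'le 0 (by omega)], hfp, hfc, hfd⟩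


lemma aux_liminf_bot (a : ℕ → ℤ) (h : ∀ B : ℤ, ∃ N, ∀ k ≥ N, a k ≤ B) :
    liminf (fun k => (((a k : ℝ)) : EReal)) atTop = ⊥ := by
  have ht : Tendsto (fun k => (((a k : ℝ)) : EReal)) atTop (nhds ⊥) := by
    rw [EReal.tendsto_nhds_bot_iff_real]
    intro x
    obtain ⟨N, hN⟩ := h (⌊x⌋ - 1)
    filter_upwards [eventually_ge_atTop N] with k hk
    have h1 := hN k hk
    have h2 : (a k : ℝ) < x := by
      have h3 : (a k : ℝ) ≤ (⌊x⌋ : ℝ) - 1 := by exact_mod_cast h1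
      have h4 := Int.floor_le x
      linarith
    exact_mod_cast EReal.coe_lt_coe_iff.2 h2
  exact ht.liminf_eq

lemma aux_liminf_top (a : ℕ → ℤ) (h : ∀ B : ℤ, ∃ N, ∀ k ≥ N, B ≤ a k) :
    liminf (fun k => (((a k : ℝ)) : EReal)) atTop = ⊤ := by
  have ht : Tendsto (fun k => (((a k : ℝ)) : EReal)) atTop (nhds ⊤) := by
    rw [EReal.tendsto_nhds_top_iff_real]
    intro x
    obtain ⟨N, hN⟩ := h (⌈x⌉ + 1)
    filter_upwards [eventually_ge_atTop N] with k hk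
    have h1 := hN k hk
    have h2 : x < (a k : ℝ) := by
      have h3 : (⌈x⌉ : ℝ) + 1 ≤ (a k : ℝ) := by exact_mod_cast h1
      have h4 := Int.le_ceil x
      linarith
    exact_mod_cast EReal.coe_lt_coe_iff.2 h2
  exact ht.liminf_eq

def dualG (g : Game V) : Game V where
  owner v := !g.owner v
  E := g.E
  nonempty := g.nonempty
  w a b := -g.w a b

def Strategy.toDual {g : Game V} (s : g.Strategy) : (dualG g).Strategy := ⟨s.next, s.valid⟩

lemma aux_dual_TPfin (g : Game V) (π : ℕ → V) (k : ℕ) :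
    (dualG g).TPfin π k = -(g.TPfin π k) := by
  unfold TPfin dualG
  simp [Finset.sum_neg_distrib]

lemma aux_dual_playAux (g : Game V) (σ τ : g.Strategy) (v : V) (k : ℕ) :
    (dualG g).playAux σ.toDual τ.toDual v k = g.playAux τ σ v k := by
  induction k with
  | zero => rfl
  | succ k ih =>
      show ((dualG g).step σ.toDual τ.toDual _ _, _) = (g.step τ σ _ _, _)
      rw [ih]
      unfold step dualG Strategy.toDual
      simp only
      by_cases h : g.owner (g.playAux τ σ v k).1
      · simp [h]
      · simp [h]

lemma aux_dual_play (g : Game V) (σ τ : g.Strategy) (v : V) (k : ℕ) :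
    (dualG g).play σ.toDual τ.toDual v k = g.play τ σ v k := by
  unfold play
  rw [aux_dual_playAux]


lemma aux_core [Fintype V] (g : Game V) (W : ℕ)
    (hW : ∀ v v', g.E v v' → |g.w v v'| ≤ (W:ℤ)) (σ : g.Strategy) (hσ : σ.Memoryless)
    (π : ℕ → V) (n : ℕ) (hE : ∀ i, i < n → g.E (π i) (π (i+1)))
    (hC : ∀ k, k < n → g.owner (π k) = true → π (k+1) = σ.next [] (π k))
    (hlt : g.TPfin π n < -(((Fintype.card V : ℤ) - 1) * W)) :
    ∃ τ : g.Strategy, ∀ B : ℤ, ∃ N, ∀ k ≥ N, g.TPfin (g.play σ τ (π 0)) k ≤ B := by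
  obtain ⟨f, hf0, hfp, hfc, hfd⟩ := g.aux_lasso W hW σ n π hE hC hlt
  obtain ⟨τ, hτ⟩ := g.aux_realize σ hσ f hfp hfc
  refine ⟨τ, fun B => ?_⟩
  obtain ⟨N, hN⟩ := hfd B
  refine ⟨N, fun k hk => ?_⟩
  have hpe : g.play σ τ (π 0) = f := by rw [← hf0]; exact funext hτ
  rw [hpe]
  exact hN k hk

end Game

/-- in a total-payoff game, if `σ` is a memoryless strategy of Max with
`Val(v, σ) ≠ −∞`, then every finite play from `v` conforming to `σ` has total payoff
at least `−(|V|−1)·W`; symmetrically, if `τ` is a memoryless strategy of Min with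
`Val(v, τ) ≠ +∞`, then every finite play from `v` conforming to `τ` has total payoff
at most `(|V|−1)·W`. -/
theorem statement_10 {V : Type} [Fintype V] (g : Game V) (W : ℕ)
    (hW : ∀ v v', g.E v v' → |g.w v v'| ≤ (W : ℤ)) (v : V) :
    (∀ σ : g.Strategy, σ.Memoryless → g.valMax g.TP v σ ≠ ⊥ →
      ∀ (π : ℕ → V) (n : ℕ), π 0 = v →
        (∀ i, i < n → g.E (π i) (π (i+1))) →
        (∀ k, k < n → g.owner (π k) = true → π (k+1) = σ.next (Game.hist π k) (π k)) →
        -(((Fintype.card V : ℤ) - 1) * (W : ℤ)) ≤ g.TPfin π n) ∧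
    (∀ τ : g.Strategy, τ.Memoryless → g.valMin g.TP v τ ≠ ⊤ →
      ∀ (π : ℕ → V) (n : ℕ), π 0 = v →
        (∀ i, i < n → g.E (π i) (π (i+1))) →
        (∀ k, k < n → g.owner (π k) = false → π (k+1) = τ.next (Game.hist π k) (π k)) →
        g.TPfin π n ≤ ((Fintype.card V : ℤ) - 1) * (W : ℤ)) := by
  constructor
  · intro σ hσ hval π n h0 hE hC
    by_contra hcon
    push_neg at hcon
    have hC' : ∀ k, k < n → g.owner (π k) = true → π (k+1) = σ.next [] (π k) :=
      fun k hk ho => (hC k hk ho).trans (hσ (Game.hist π k) [] (π k))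
    obtain ⟨τ, hτ⟩ := g.aux_core W hW σ hσ π n hE hC' hcon
    apply hval
    have hbot : g.TP (g.play σ τ v) = ⊥ := by
      rw [← h0]
      exact Game.aux_liminf_bot _ hτ
    have hle : g.valMax g.TP v σ ≤ ⊥ := by
      rw [← hbot]
      exact iInf_le _ τ
    exact le_bot_iff.1 hle
  · intro τ hτm hval π n h0 hE hC
    by_contra hcon
    push_neg at hcon
    have hW' : ∀ a b, (Game.dualG g).E a b → |(Game.dualG g).w a b| ≤ (W:ℤ) := by
      intro a b hab
      show |-(g.w a b)| ≤ _
      rw [abs_neg]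
      exact hW a b hab
    have hσm : (τ.toDual).Memoryless := fun h h' v => hτm h h' v
    have hE' : ∀ i, i < n → (Game.dualG g).E (π i) (π (i+1)) := hE
    have hC' : ∀ k, k < n → (Game.dualG g).owner (π k) = true →
        π (k+1) = (τ.toDual).next [] (π k) := by
      intro k hk ho
      have ho2 : g.owner (π k) = false := by
        have hb : (!g.owner (π k)) = true := ho
        simpa using hb
      exact (hC k hk ho2).trans (hτm _ [] _)
    have hlt' : (Game.dualG g).TPfin π n < -(((Fintype.card V : ℤ) - 1) * W) := by
      rw [Game.aux_dual_TPfin]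
      linarith
    obtain ⟨τ', hτ'⟩ := (Game.dualG g).aux_core W hW' τ.toDual hσm π n hE' hC' hlt'
    set σ₀ : g.Strategy := ⟨τ'.next, τ'.valid⟩ with hσ₀
    have hrt : σ₀.toDual = τ' := rfl
    have hplayeq : (Game.dualG g).play τ.toDual τ' (π 0) = g.play σ₀ τ (π 0) := by
      funext k
      rw [← hrt]
      exact g.aux_dual_play τ σ₀ (π 0) k
    have hdiv : ∀ B : ℤ, ∃ N, ∀ k ≥ N, B ≤ g.TPfin (g.play σ₀ τ (π 0)) k := by
      intro B
      obtain ⟨N, hN⟩ := hτ' (-B)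
      refine ⟨N, fun k hk => ?_⟩
      have hx := hN k hk
      rw [hplayeq, Game.aux_dual_TPfin] at hx
      linarith
    apply hval
    have htop : g.TP (g.play σ₀ τ v) = ⊤ := by
      rw [← h0]
      exact Game.aux_liminf_top _ hdiv
    have hle : ⊤ ≤ g.valMin g.TP v τ := by
      rw [← htop]
      exact le_iSup (fun σ : g.Strategy => g.TP (g.play σ τ v)) σ₀
    exact top_le_iff.1 hle
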